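/- Let m ≥ 1, σ > 1, and weights β ∈ ℝ^m with β_j > 0 for all j and Σ_j β_j = 1. For any price vector p ∈ ℝ^m with p_j > 0 for all j and any budget b > 0, the CES utility function u(x) = (Σ_{j=1}^m β_j^{1/σ} x_j^{(σ−1)/σ})^{σ/(σ−1)} attains its maximum over the budget set {x ∈ ℝ^m : x ≥ 0, p·x ≤ b} at the unique point x* given by x*_j = β_j p_j^{−σ} b / (Σ_{k=1}^m β_k p_k^{1−σ}) for every j. -/

import Mathlib

open Finset

/-- Tangent line inequality for `t ↦ t ^ r`, `0 < r < 1`, strict version. -/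
lemma ces_tangent_lt {a t r : ℝ} (ha : 0 < a) (ht : 0 ≤ t) (hne : t ≠ a)
    (hr1 : 0 < r) (hr2 : r < 1) :
    t ^ r < a ^ r + r * (a ^ (r - 1) * (t - a)) := by
  have hs : -1 ≤ t / a - 1 := by
    have := div_nonneg ht ha.le; linarith
  have hs' : t / a - 1 ≠ 0 := by
    intro h
    apply hne
    have h1 : t / a = 1 := by linarith
    field_simp at h1
    exact h1
  have h := rpow_one_add_lt_one_add_mul_self (s := t / a - 1) hs hs' hr1 hr2
  rw [show 1 + (t / a - 1) = t / a by ring, Real.div_rpow ht ha.le] at h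
  have har : 0 < a ^ r := Real.rpow_pos_of_pos ha r
  have h3 : t ^ r < (1 + r * (t / a - 1)) * a ^ r := (div_lt_iff₀ har).mp h
  have key : (1 + r * (t / a - 1)) * a ^ r = a ^ r + r * (a ^ (r - 1) * (t - a)) := by
    rw [Real.rpow_sub_one ha.ne']
    field_simp
  rw [key] at h3
  exact h3

/-- Tangent line inequality for `t ↦ t ^ r`, `0 < r < 1`, weak version. -/
lemma ces_tangent_le {a t r : ℝ} (ha : 0 < a) (ht : 0 ≤ t)
    (hr1 : 0 < r) (hr2 : r < 1) :
    t ^ r ≤ a ^ r + r * (a ^ (r - 1) * (t - a)) := by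
  by_cases h : t = a
  · subst h; simp
  · exact (ces_tangent_lt ha ht h hr1 hr2).le

/-- The CES utility `u(x) = (Σ_j β_j^(1/σ) x_j^((σ-1)/σ))^(σ/(σ-1))`
with parameter `σ > 1` and positive weights `β` summing to `1` attains its maximum over
the budget set `{x ≥ 0 : p·x ≤ b}` at the unique point
`x*_j = β_j p_j^(-σ) b / (Σ_k β_k p_k^(1-σ))`. -/
theorem ces_utility_max_at_unique_point
    (m : ℕ) (hm : 1 ≤ m) (σ : ℝ) (hσ : 1 < σ)
    (β : Fin m → ℝ) (hβ : ∀ j, 0 < β j) (hβ1 : ∑ j, β j = 1)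
    (p : Fin m → ℝ) (hp : ∀ j, 0 < p j) (b : ℝ) (hb : 0 < b)
    (u : (Fin m → ℝ) → ℝ)
    (hu : ∀ x : Fin m → ℝ,
      u x = (∑ j, (β j) ^ (1 / σ) * (x j) ^ ((σ - 1) / σ)) ^ (σ / (σ - 1)))
    (xstar : Fin m → ℝ)
    (hxstar : ∀ j, xstar j = β j * (p j) ^ (-σ) * b / (∑ k, β k * (p k) ^ (1 - σ))) :
    (∀ j, 0 ≤ xstar j) ∧ (∑ j, p j * xstar j ≤ b) ∧
    (∀ x : Fin m → ℝ, (∀ j, 0 ≤ x j) → (∑ j, p j * x j ≤ b) → u x ≤ u xstar) ∧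
    (∀ x : Fin m → ℝ, (∀ j, 0 ≤ x j) → (∑ j, p j * x j ≤ b) → u x = u xstar →
      x = xstar) := by
  have hσ0 : (0:ℝ) < σ := lt_trans one_pos hσ
  set r : ℝ := (σ - 1) / σ with hr_def
  have hr1 : 0 < r := div_pos (by linarith) hσ0
  have hr2 : r < 1 := by
    rw [hr_def, div_lt_one hσ0]; linarith
  set S : ℝ := ∑ k, β k * (p k) ^ (1 - σ) with hS_def
  have hS : 0 < S := by
    apply Finset.sum_pos
    · intro k _
      exact mul_pos (hβ k) (Real.rpow_pos_of_pos (hp k) _)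
    · haveI : Nonempty (Fin m) := Fin.pos_iff_nonempty.mp hm
      exact Finset.univ_nonempty
  have hxpos : ∀ j, 0 < xstar j := by
    intro j
    rw [hxstar j]
    exact div_pos (mul_pos (mul_pos (hβ j) (Real.rpow_pos_of_pos (hp j) _)) hb) hS
  -- budget is exactly met at xstar
  have hbudget : ∑ j, p j * xstar j = b := by
    have : ∀ j, p j * xstar j = β j * (p j) ^ (1 - σ) * b / S := by
      intro j
      rw [hxstar j, show (1:ℝ) - σ = 1 + (-σ) by ring, Real.rpow_add (hp j),
        Real.rpow_one]
      field_simp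
    rw [Finset.sum_congr rfl fun j _ => this j, ← Finset.sum_div, ← Finset.sum_mul]
    rw [← hS_def]
    field_simp
  -- key constant
  set K : ℝ := (b / S) ^ (-(1 / σ)) with hK_def
  have hK : 0 < K := Real.rpow_pos_of_pos (div_pos hb hS) _
  have hkey : ∀ j, β j ^ (1 / σ) * xstar j ^ (r - 1) = p j * K := by
    intro j
    have hx' : xstar j = β j * (p j) ^ (-σ) * (b / S) := by
      rw [hxstar j]; ring
    have hrm1 : r - 1 = -(1 / σ) := by
      rw [hr_def]; field_simp; ring
    rw [hx', hrm1,
      Real.mul_rpow (mul_nonneg (hβ j).le (Real.rpow_nonneg (hp j).le _))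
        (div_pos hb hS).le,
      Real.mul_rpow (hβ j).le (Real.rpow_nonneg (hp j).le _),
      ← Real.rpow_mul (hp j).le]
    have he : -σ * -(1 / σ) = 1 := by field_simp
    rw [he, Real.rpow_one, hK_def]
    have hb1 : β j ^ (1 / σ) * β j ^ (-(1 / σ)) = 1 := by
      rw [← Real.rpow_add (hβ j)]; norm_num
    linear_combination (p j * (b / S) ^ (-(1 / σ))) * hb1
  -- the core inequality on F x := ∑ β^{1/σ} x^r
  have hF_nonneg : ∀ x : Fin m → ℝ, (∀ j, 0 ≤ x j) →
      0 ≤ ∑ j, (β j) ^ (1 / σ) * (x j) ^ r := by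
    intro x hx
    apply Finset.sum_nonneg
    intro j _
    exact mul_nonneg (Real.rpow_nonneg (hβ j).le _) (Real.rpow_nonneg (hx j) _)
  -- tangent bound per coordinate
  have hterm : ∀ (x : Fin m → ℝ), (∀ j, 0 ≤ x j) → ∀ j,
      (β j) ^ (1 / σ) * (x j) ^ r ≤
        (β j) ^ (1 / σ) * (xstar j) ^ r + r * K * (p j * (x j - xstar j)) := by
    intro x hx j
    have hβp : (0:ℝ) < (β j) ^ (1 / σ) := Real.rpow_pos_of_pos (hβ j) _
    have h := mul_le_mul_of_nonneg_left
      (ces_tangent_le (hxpos j) (hx j) hr1 hr2) hβp.le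
    calc (β j) ^ (1 / σ) * (x j) ^ r
        ≤ (β j) ^ (1 / σ) * ((xstar j) ^ r + r * ((xstar j) ^ (r - 1) * (x j - xstar j))) := h
      _ = (β j) ^ (1 / σ) * (xstar j) ^ r +
            r * ((β j) ^ (1 / σ) * xstar j ^ (r - 1)) * (x j - xstar j) := by ring
      _ = (β j) ^ (1 / σ) * (xstar j) ^ r + r * K * (p j * (x j - xstar j)) := by
            rw [hkey j]; ring
  -- sum of tangent bounds
  have hsumtan : ∀ (x : Fin m → ℝ),
      ∑ j, ((β j) ^ (1 / σ) * (xstar j) ^ r + r * K * (p j * (x j - xstar j))) =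
        (∑ j, (β j) ^ (1 / σ) * (xstar j) ^ r) + r * K * ((∑ j, p j * x j) - b) := by
    intro x
    rw [← hbudget, Finset.sum_add_distrib]
    congr 1
    rw [← Finset.sum_sub_distrib, Finset.mul_sum]
    exact Finset.sum_congr rfl fun j _ => by ring
  have hFle : ∀ (x : Fin m → ℝ), (∀ j, 0 ≤ x j) → (∑ j, p j * x j ≤ b) →
      ∑ j, (β j) ^ (1 / σ) * (x j) ^ r ≤ ∑ j, (β j) ^ (1 / σ) * (xstar j) ^ r := by
    intro x hx hbx
    calc ∑ j, (β j) ^ (1 / σ) * (x j) ^ r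
        ≤ ∑ j, ((β j) ^ (1 / σ) * (xstar j) ^ r + r * K * (p j * (x j - xstar j))) :=
          Finset.sum_le_sum fun j _ => hterm x hx j
      _ = (∑ j, (β j) ^ (1 / σ) * (xstar j) ^ r) + r * K * ((∑ j, p j * x j) - b) :=
          hsumtan x
      _ ≤ ∑ j, (β j) ^ (1 / σ) * (xstar j) ^ r := by
          have : r * K * ((∑ j, p j * x j) - b) ≤ 0 :=
            mul_nonpos_of_nonneg_of_nonpos (mul_pos hr1 hK).le (by linarith)
          linarith
  refine ⟨fun j => (hxpos j).le, le_of_eq hbudget, ?_, ?_⟩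
  · -- maximality
    intro x hx hbx
    rw [hu x, hu xstar]
    exact Real.rpow_le_rpow (hF_nonneg x hx) (hFle x hx hbx)
      (le_of_lt (div_pos hσ0 (by linarith)))
  · -- uniqueness
    intro x hx hbx hux
    -- first, F x = F xstar
    have hFeq : ∑ j, (β j) ^ (1 / σ) * (x j) ^ r = ∑ j, (β j) ^ (1 / σ) * (xstar j) ^ r := by
      rcases lt_or_eq_of_le (hFle x hx hbx) with h | h
      · exfalso
        have : u x < u xstar := by
          rw [hu x, hu xstar]
          exact Real.rpow_lt_rpow (hF_nonneg x hx) h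
            (div_pos hσ0 (by linarith))
        exact absurd hux this.ne
      · exact h
    -- budget must be tight
    have htight : ∑ j, p j * x j = b := by
      by_contra h
      have hlt : ∑ j, p j * x j < b := lt_of_le_of_ne hbx h
      have h1 : ∑ j, (β j) ^ (1 / σ) * (x j) ^ r ≤
          (∑ j, (β j) ^ (1 / σ) * (xstar j) ^ r) + r * K * ((∑ j, p j * x j) - b) := by
        rw [← hsumtan x]
        exact Finset.sum_le_sum fun j _ => hterm x hx j
      have h2 : r * K * ((∑ j, p j * x j) - b) < 0 :=
        mul_neg_of_pos_of_neg (mul_pos hr1 hK) (by linarith)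
      rw [hFeq] at h1
      linarith
    -- now termwise equality
    have hd0 : ∀ j ∈ Finset.univ, ((β j) ^ (1 / σ) * (xstar j) ^ r +
        r * K * (p j * (x j - xstar j))) - (β j) ^ (1 / σ) * (x j) ^ r = 0 := by
      have hsum0 : ∑ j, (((β j) ^ (1 / σ) * (xstar j) ^ r +
          r * K * (p j * (x j - xstar j))) - (β j) ^ (1 / σ) * (x j) ^ r) = 0 := by
        rw [Finset.sum_sub_distrib, hsumtan x, htight, hFeq]
        ring
      intro j hj
      exact (Finset.sum_eq_zero_iff_of_nonneg
        (fun j _ => sub_nonneg.mpr (hterm x hx j))).mp hsum0 j hj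
    funext j
    by_contra hne
    have hstrict := ces_tangent_lt (hxpos j) (hx j) hne hr1 hr2
    have hβp : (0:ℝ) < (β j) ^ (1 / σ) := Real.rpow_pos_of_pos (hβ j) _
    have h := mul_lt_mul_of_pos_left hstrict hβp
    have hd := hd0 j (Finset.mem_univ j)
    have hk := hkey j
    have h2 : (β j) ^ (1 / σ) * ((xstar j) ^ r + r * ((xstar j) ^ (r - 1) * (x j - xstar j))) =
        (β j) ^ (1 / σ) * (xstar j) ^ r + r * K * (p j * (x j - xstar j)) := by
      linear_combination (r * (x j - xstar j)) * hk
    linarith [h, hd, h2]
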